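/- Let n_w a_s k = k(γ) n_u a_r be an Iwasawa (NAK) factorization in SO(1,d), where k(γ) = diag(1, u₀) with u₀ = (u_{ij}) ∈ SO(d). Then s^{-1} = ((1−u_{11})/2) r + ((1+u_{11})/2 + β) r^{-1}, where β = (1−u_{11})|u|²/2 − Σ_{i=2}^{n} u_{1i} u_{i-1}, with u ∈ ℝ^{n-1} embedded as (u₁,…,u_{n-1},0,…,0) in ℝ^{d-1}. -/

import Mathlib

open Matrix

/-- The element `a_r = exp((log r) E) ∈ SO(1, m+1)`, with `cosh(log r)`, `sinh(log r)`
in the upper-left 2×2 block and the identity elsewhere. -/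
noncomputable def aMat (m : ℕ) (r : ℝ) : Matrix (Fin (m + 2)) (Fin (m + 2)) ℝ :=
  Matrix.of fun i j =>
    if i.val = 0 ∧ j.val = 0 then Real.cosh (Real.log r)
    else if i.val = 0 ∧ j.val = 1 then Real.sinh (Real.log r)
    else if i.val = 1 ∧ j.val = 0 then Real.sinh (Real.log r)
    else if i.val = 1 ∧ j.val = 1 then Real.cosh (Real.log r)
    else if i = j then 1 else 0

/-- The unipotent element `n_u = exp(Σᵢ uᵢ Eᵢ) ∈ SO(1, m+1)` of the Iwasawa
decomposition, in its explicit matrix form. -/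
noncomputable def nMat (m : ℕ) (u : Fin m → ℝ) : Matrix (Fin (m + 2)) (Fin (m + 2)) ℝ :=
  Matrix.of fun i j =>
    if hi0 : i.val = 0 then
      if hj0 : j.val = 0 then 1 + (∑ k, u k ^ 2) / 2
      else if hj1 : j.val = 1 then -((∑ k, u k ^ 2) / 2)
      else u ⟨j.val - 2, by have := j.isLt; omega⟩
    else if hi1 : i.val = 1 then
      if hj0 : j.val = 0 then (∑ k, u k ^ 2) / 2
      else if hj1 : j.val = 1 then 1 - (∑ k, u k ^ 2) / 2
      else u ⟨j.val - 2, by have := j.isLt; omega⟩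
    else
      if hj0 : j.val = 0 then u ⟨i.val - 2, by have := i.isLt; omega⟩
      else if hj1 : j.val = 1 then -u ⟨i.val - 2, by have := i.isLt; omega⟩
      else if i = j then 1 else 0

/-- The element `k(γ) = diag(1, u₀)` of `K ⊂ SO(1, m+1)`, where `u₀ ∈ SO(m+1)`. -/
noncomputable def diagK (m : ℕ) (u₀ : Matrix (Fin (m + 1)) (Fin (m + 1)) ℝ) :
    Matrix (Fin (m + 2)) (Fin (m + 2)) ℝ :=
  Matrix.of fun i j =>
    if hi0 : i.val = 0 then (if j.val = 0 then (1:ℝ) else 0)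
    else if hj0 : j.val = 0 then 0
    else u₀ ⟨i.val - 1, by have := i.isLt; omega⟩ ⟨j.val - 1, by have := j.isLt; omega⟩

lemma padSum (m p : ℕ) (hpm : p ≤ m) (G : Fin p → ℝ) :
    (∑ i : Fin m, if h : i.val < p then G ⟨i.val, h⟩ else 0) = ∑ j : Fin p, G j := by
  rw [Fin.sum_univ_eq_sum_range (fun i => if h : i < p then G ⟨i, h⟩ else 0) m]
  have hG : ∑ j : Fin p, G j
      = ∑ j : Fin p, (fun i : ℕ => if h : i < p then G ⟨i, h⟩ else 0) j.val := by
    refine Finset.sum_congr rfl fun j _ => ?_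
    simp [j.isLt]
  rw [hG, Fin.sum_univ_eq_sum_range (fun i => if h : i < p then G ⟨i, h⟩ else 0) p]
  refine (Finset.sum_subset (Finset.range_subset_range.2 hpm) ?_).symm
  intro i _ hi
  rw [dif_neg (by simpa using hi)]

lemma algKey (r ri sinv Q S g : ℝ) (h1 : r * ri = 1)
    (hsum : sinv^2*2 = ((1 + (1-g)*Q/2 - S)*((r+ri)/2) + (-g - ((1-g)*Q/2 - S))*((r-ri)/2))^2
      + (((1 + (1-g)*Q/2 - S)*((r-ri)/2) + (-g - ((1-g)*Q/2 - S))*((r+ri)/2))^2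
        + ((1-g)^2*Q - 2*(1-g)*S + (1 - g*g)))) :
    sinv^2 = ((1-g)/2*r + ((1+g)/2 + ((1-g)*Q/2 - S))*ri)^2 := by
  linear_combination hsum/2
    - (((1 + (1-g)*Q/2 - S)^2 - (-g - ((1-g)*Q/2 - S))^2)/2) * h1

lemma auxXnn (Q S g : ℝ) (hQ : 0 ≤ Q) (hCS : S^2 ≤ (1-g*g)*Q) (hg1 : -1 ≤ g) (hg2 : g ≤ 1) :
    0 ≤ (1+g)/2 + ((1-g)*Q/2 - S) := by
  nlinarith [sq_nonneg (1+g - (1-g)*Q), mul_nonneg (sub_nonneg.2 hg2) hQ]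

lemma auxTnn (Q S g r : ℝ) (hr : 0 < r) (hX : 0 ≤ (1+g)/2 + ((1-g)*Q/2 - S)) (hg2 : g ≤ 1) :
    0 ≤ (1-g)/2*r + ((1+g)/2 + ((1-g)*Q/2 - S))*r⁻¹ :=
  add_nonneg (mul_nonneg (by linarith) hr.le) (mul_nonneg hX (inv_pos.2 hr).le)

/-- If `n_w a_s k = k(γ) n_u a_r` is an Iwasawa (NAK) factorization in `SO(1, d)`
(here `d = m+1`) with `k(γ) = diag(1, u₀)`, `u₀ = (u_{ij}) ∈ SO(d)`, and `u ∈ ℝ^{n-1}`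
embedded as `(u₁,…,u_{n-1},0,…,0)` in `ℝ^{d-1}`, then
`s⁻¹ = ((1−u₁₁)/2) r + ((1+u₁₁)/2 + β) r⁻¹` where
`β = (1−u₁₁)|u|²/2 − Σ_{i=2}^{n} u_{1i} u_{i-1}`. -/
theorem iwasawa_s_inv (n m : ℕ) (hn : 2 ≤ n) (hnm : n - 1 ≤ m)
    (u₀ : Matrix (Fin (m + 1)) (Fin (m + 1)) ℝ) (hortho : u₀ * u₀ᵀ = 1) (hdet : u₀.det = 1)
    (u : Fin (n - 1) → ℝ) (r s : ℝ) (hr : 0 < r) (hs : 0 < s)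
    (w : Fin m → ℝ) (k : Matrix (Fin (m + 2)) (Fin (m + 2)) ℝ) (hk : k * kᵀ = 1)
    (heq : nMat m w * aMat m s * k =
      diagK m u₀ *
        nMat m (fun i => if h : i.val < n - 1 then u ⟨i.val, h⟩ else 0) * aMat m r) :
    s⁻¹ = ((1 - u₀ 0 0) / 2) * r +
      ((1 + u₀ 0 0) / 2 +
        ((1 - u₀ 0 0) * (∑ j, u j ^ 2) / 2
          - ∑ j : Fin (n - 1), u₀ 0 ⟨j.val + 1, by have := j.isLt; omega⟩ * u j)) * r⁻¹ := by
  set U : Fin m → ℝ := fun i => if h : i.val < n - 1 then u ⟨i.val, h⟩ else 0 with hU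
  set g0 : ℝ := u₀ 0 0 with hg0def
  -- abbreviations
  have hsucc : ∀ (x : Fin m) (h : x.val + 1 < m + 1), (⟨x.val + 1, h⟩ : Fin (m+1)) = x.succ :=
    fun _ _ => rfl
  -- left row difference
  have hL : ∀ j, (nMat m w * aMat m s * k) 0 j - (nMat m w * aMat m s * k) 1 j
      = s⁻¹ * (k 0 j - k 1 j) := by
    intro j
    have hrow : ∀ t, (nMat m w * aMat m s) 0 t - (nMat m w * aMat m s) 1 t
        = aMat m s 0 t - aMat m s 1 t := by
      intro t
      rw [Matrix.mul_apply, Matrix.mul_apply, ← Finset.sum_sub_distrib,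
        Fin.sum_univ_succ, Fin.sum_univ_succ]
      simp [nMat, Fin.ext_iff, -Fin.val_eq_zero_iff]
      ring
    have hcs : Real.cosh (Real.log s) - Real.sinh (Real.log s) = s⁻¹ := by
      rw [Real.cosh_eq, Real.sinh_eq, Real.exp_neg, Real.exp_log hs]; ring
    rw [Matrix.mul_apply, Matrix.mul_apply, ← Finset.sum_sub_distrib]
    have hterm : ∀ t, (nMat m w * aMat m s) 0 t * k t j - (nMat m w * aMat m s) 1 t * k t j
        = (aMat m s 0 t - aMat m s 1 t) * k t j := fun t => by rw [← sub_mul, hrow t]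
    rw [Finset.sum_congr rfl fun t _ => hterm t, Fin.sum_univ_succ, Fin.sum_univ_succ]
    simp [aMat, Fin.ext_iff, hcs, -Fin.val_eq_zero_iff]
    rw [Real.exp_neg, Real.exp_log hs]; ring
  -- entries of heq
  have hEj : ∀ j, s⁻¹ * (k 0 j - k 1 j)
      = (diagK m u₀ * nMat m U * aMat m r) 0 j - (diagK m u₀ * nMat m U * aMat m r) 1 j := by
    intro j
    rw [← congrFun (congrFun heq 0) j, ← congrFun (congrFun heq 1) j]
    exact (hL j).symm
  -- rows of P := diagK * nMat U
  have hR0 : (diagK m u₀ * nMat m U) 0 0 - (diagK m u₀ * nMat m U) 1 0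
      = 1 + (1 - g0) * (∑ i, U i ^ 2) / 2 - (∑ t : Fin m, u₀ 0 t.succ * U t) := by
    rw [Matrix.mul_apply, Matrix.mul_apply, ← Finset.sum_sub_distrib,
      Fin.sum_univ_succ, Fin.sum_univ_succ]
    simp [diagK, nMat, Fin.ext_iff, hsucc, Finset.sum_sub_distrib, sub_mul, hg0def, -Fin.val_eq_zero_iff]
    ring
  have hR1 : (diagK m u₀ * nMat m U) 0 1 - (diagK m u₀ * nMat m U) 1 1
      = -g0 - ((1 - g0) * (∑ i, U i ^ 2) / 2 - (∑ t : Fin m, u₀ 0 t.succ * U t)) := by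
    rw [Matrix.mul_apply, Matrix.mul_apply, ← Finset.sum_sub_distrib,
      Fin.sum_univ_succ, Fin.sum_univ_succ]
    simp [diagK, nMat, Fin.ext_iff, hsucc, Finset.sum_sub_distrib, sub_mul, hg0def, -Fin.val_eq_zero_iff]
    ring
  have hRt : ∀ q : Fin m, (diagK m u₀ * nMat m U) 0 q.succ.succ
        - (diagK m u₀ * nMat m U) 1 q.succ.succ
      = (1 - g0) * U q - u₀ 0 q.succ := by
    intro q
    rw [Matrix.mul_apply, Matrix.mul_apply, ← Finset.sum_sub_distrib,
      Fin.sum_univ_succ, Fin.sum_univ_succ]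
    simp [diagK, nMat, hsucc, Finset.sum_sub_distrib, sub_mul, mul_ite,
      Finset.sum_ite_eq', Fin.succ_inj, hg0def]
    ring
  -- columns of aMat
  have hC0 : ∀ P : Matrix (Fin (m+2)) (Fin (m+2)) ℝ,
      (P * aMat m r) 0 0 - (P * aMat m r) 1 0
        = (P 0 0 - P 1 0) * Real.cosh (Real.log r) + (P 0 1 - P 1 1) * Real.sinh (Real.log r) := by
    intro P
    rw [Matrix.mul_apply, Matrix.mul_apply, ← Finset.sum_sub_distrib,
      Fin.sum_univ_succ, Fin.sum_univ_succ]
    simp [aMat, Fin.ext_iff, -Fin.val_eq_zero_iff]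
    ring
  have hC1 : ∀ P : Matrix (Fin (m+2)) (Fin (m+2)) ℝ,
      (P * aMat m r) 0 1 - (P * aMat m r) 1 1
        = (P 0 0 - P 1 0) * Real.sinh (Real.log r) + (P 0 1 - P 1 1) * Real.cosh (Real.log r) := by
    intro P
    rw [Matrix.mul_apply, Matrix.mul_apply, ← Finset.sum_sub_distrib,
      Fin.sum_univ_succ, Fin.sum_univ_succ]
    simp [aMat, Fin.ext_iff, -Fin.val_eq_zero_iff]
    ring
  have hCt : ∀ (P : Matrix (Fin (m+2)) (Fin (m+2)) ℝ) (q : Fin m),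
      (P * aMat m r) 0 q.succ.succ - (P * aMat m r) 1 q.succ.succ
        = P 0 q.succ.succ - P 1 q.succ.succ := by
    intro P q
    rw [Matrix.mul_apply, Matrix.mul_apply, ← Finset.sum_sub_distrib,
      Fin.sum_univ_succ, Fin.sum_univ_succ]
    simp only [aMat, Matrix.of_apply, Fin.ext_iff, sub_mul, Finset.sum_sub_distrib]
    norm_num
    rw [Finset.sum_congr rfl fun x _ => if_congr (Fin.val_eq_val x q) rfl rfl,
      Finset.sum_congr rfl fun x _ => if_congr (Fin.val_eq_val x q) rfl rfl,
      Finset.sum_ite_eq' Finset.univ q, Finset.sum_ite_eq' Finset.univ q]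
    simp
  -- the three scalar equations
  have E0 : s⁻¹ * (k 0 0 - k 1 0)
      = (1 + (1 - g0) * (∑ i, U i ^ 2) / 2 - (∑ t : Fin m, u₀ 0 t.succ * U t))
          * Real.cosh (Real.log r)
        + (-g0 - ((1 - g0) * (∑ i, U i ^ 2) / 2 - (∑ t : Fin m, u₀ 0 t.succ * U t)))
          * Real.sinh (Real.log r) := by
    rw [hEj 0, hC0, hR0, hR1]
  have E1 : s⁻¹ * (k 0 1 - k 1 1)
      = (1 + (1 - g0) * (∑ i, U i ^ 2) / 2 - (∑ t : Fin m, u₀ 0 t.succ * U t))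
          * Real.sinh (Real.log r)
        + (-g0 - ((1 - g0) * (∑ i, U i ^ 2) / 2 - (∑ t : Fin m, u₀ 0 t.succ * U t)))
          * Real.cosh (Real.log r) := by
    rw [hEj 1, hC1, hR0, hR1]
  have Et : ∀ q : Fin m, s⁻¹ * (k 0 q.succ.succ - k 1 q.succ.succ)
      = (1 - g0) * U q - u₀ 0 q.succ := by
    intro q
    rw [hEj q.succ.succ, hCt, hRt q]
  -- sum of squares of k-row difference
  have hk2 : ∑ j, (k 0 j - k 1 j)^2 = 2 := by
    have h00 := congrFun (congrFun hk 0) 0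
    have h01 := congrFun (congrFun hk 0) 1
    have h11 := congrFun (congrFun hk 1) 1
    simp [Matrix.mul_apply, Matrix.one_apply, Fin.ext_iff] at h00 h01 h11
    have hexp : ∀ j : Fin (m+2), (k 0 j - k 1 j)^2
        = k 0 j * k 0 j - 2*(k 0 j * k 1 j) + k 1 j * k 1 j := fun j => by ring
    rw [Finset.sum_congr rfl fun j _ => hexp j, Finset.sum_add_distrib,
      Finset.sum_sub_distrib, ← Finset.mul_sum, h00, h01, h11]
    ring
  -- orthogonality of first row of u₀
  have hg : g0 * g0 + ∑ q : Fin m, u₀ 0 q.succ * u₀ 0 q.succ = 1 := by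
    have h := congrFun (congrFun hortho 0) 0
    rw [Matrix.mul_apply, Fin.sum_univ_succ] at h
    simpa [Matrix.one_apply, hg0def] using h
  -- sum over all entries
  have hsum2 : ∑ j : Fin (m+2), (s⁻¹ * (k 0 j - k 1 j))^2 = (s⁻¹)^2 * 2 := by
    rw [Finset.sum_congr rfl fun j _ => mul_pow s⁻¹ (k 0 j - k 1 j) 2,
      ← Finset.mul_sum, hk2]
  have hsum3 : ∑ j : Fin (m+2), (s⁻¹ * (k 0 j - k 1 j))^2
      = ((1 + (1 - g0) * (∑ i, U i ^ 2) / 2 - (∑ t : Fin m, u₀ 0 t.succ * U t))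
            * Real.cosh (Real.log r)
          + (-g0 - ((1 - g0) * (∑ i, U i ^ 2) / 2 - (∑ t : Fin m, u₀ 0 t.succ * U t)))
            * Real.sinh (Real.log r))^2
        + (((1 + (1 - g0) * (∑ i, U i ^ 2) / 2 - (∑ t : Fin m, u₀ 0 t.succ * U t))
            * Real.sinh (Real.log r)
          + (-g0 - ((1 - g0) * (∑ i, U i ^ 2) / 2 - (∑ t : Fin m, u₀ 0 t.succ * U t)))
            * Real.cosh (Real.log r))^2
        + ∑ q : Fin m, ((1 - g0) * U q - u₀ 0 q.succ)^2) := by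
    rw [Fin.sum_univ_succ, Fin.sum_univ_succ, Fin.succ_zero_eq_one, E0, E1]
    congr 2
    exact Finset.sum_congr rfl fun q _ => by rw [Et q]
  have hgtail : ∑ q : Fin m, u₀ 0 q.succ * u₀ 0 q.succ = 1 - g0 * g0 := by linarith
  have htail : ∑ q : Fin m, ((1 - g0) * U q - u₀ 0 q.succ)^2
      = (1 - g0)^2 * (∑ i, U i ^ 2) - 2*(1 - g0)*(∑ t : Fin m, u₀ 0 t.succ * U t)
        + (1 - g0 * g0) := by
    have hexp : ∀ q : Fin m, ((1 - g0) * U q - u₀ 0 q.succ)^2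
        = (1 - g0)^2 * U q ^ 2 - 2*(1 - g0)*(u₀ 0 q.succ * U q)
          + u₀ 0 q.succ * u₀ 0 q.succ := fun q => by ring
    rw [Finset.sum_congr rfl fun q _ => hexp q, Finset.sum_add_distrib,
      Finset.sum_sub_distrib, ← Finset.mul_sum, ← Finset.mul_sum, hgtail]
  -- main equation
  have hc : Real.cosh (Real.log r) = (r + r⁻¹)/2 := by
    rw [Real.cosh_eq, Real.exp_neg, Real.exp_log hr]
  have hd : Real.sinh (Real.log r) = (r - r⁻¹)/2 := by
    rw [Real.sinh_eq, Real.exp_neg, Real.exp_log hr]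
  have hmain := hsum3
  rw [hsum2, htail, hc, hd] at hmain
  have hrri : r * r⁻¹ = 1 := mul_inv_cancel₀ (ne_of_gt hr)
  have hkey := algKey r r⁻¹ s⁻¹ (∑ i, U i ^ 2) (∑ t : Fin m, u₀ 0 t.succ * U t) g0 hrri hmain
  -- nonnegativity
  have hQnn : (0:ℝ) ≤ ∑ i, U i ^ 2 := Finset.sum_nonneg fun i _ => sq_nonneg _
  have htnn : (0:ℝ) ≤ ∑ q : Fin m, u₀ 0 q.succ * u₀ 0 q.succ :=
    Finset.sum_nonneg fun q _ => mul_self_nonneg _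
  have hCS : (∑ t : Fin m, u₀ 0 t.succ * U t)^2
      ≤ (1 - g0*g0) * (∑ i, U i ^ 2) := by
    have h := Finset.sum_mul_sq_le_sq_mul_sq Finset.univ (fun t : Fin m => u₀ 0 t.succ) U
    have h2 : ∑ t : Fin m, u₀ 0 t.succ ^ 2 = 1 - g0 * g0 := by
      rw [Finset.sum_congr rfl fun t _ => pow_two (u₀ 0 t.succ)]
      linarith
    rw [h2] at h
    exact h
  have hgsq : g0 * g0 ≤ 1 := by linarith
  have habs : |g0| ≤ 1 := abs_le_one_iff_mul_self_le_one.2 hgsq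
  have hg0le : g0 ≤ 1 := (abs_le.1 habs).2
  have hg0ge : -1 ≤ g0 := (abs_le.1 habs).1
  have hXnn : 0 ≤ (1 + g0)/2 + ((1 - g0)*(∑ i, U i ^ 2)/2 - (∑ t : Fin m, u₀ 0 t.succ * U t)) :=
    auxXnn _ _ _ hQnn hCS hg0ge hg0le
  have hTnn : 0 ≤ (1 - g0)/2*r
      + ((1 + g0)/2 + ((1 - g0)*(∑ i, U i ^ 2)/2 - (∑ t : Fin m, u₀ 0 t.succ * U t)))*r⁻¹ :=
    auxTnn _ _ _ _ hr hXnn hg0le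
  have hspos : 0 < s⁻¹ := inv_pos.2 hs
  have h5 : (s⁻¹ - ((1 - g0)/2*r
      + ((1 + g0)/2 + ((1 - g0)*(∑ i, U i ^ 2)/2 - (∑ t : Fin m, u₀ 0 t.succ * U t)))*r⁻¹))
    * (s⁻¹ + ((1 - g0)/2*r
      + ((1 + g0)/2 + ((1 - g0)*(∑ i, U i ^ 2)/2 - (∑ t : Fin m, u₀ 0 t.succ * U t)))*r⁻¹)) = 0 := by
    linear_combination hkey
  have hfin : s⁻¹ = (1 - g0)/2*r
      + ((1 + g0)/2 + ((1 - g0)*(∑ i, U i ^ 2)/2 - (∑ t : Fin m, u₀ 0 t.succ * U t)))*r⁻¹ := by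
    rcases mul_eq_zero.1 h5 with h | h
    · linarith
    · linarith
  -- rewrite padded sums
  have hQpad : (∑ j : Fin (n-1), u j ^ 2) = ∑ i, U i ^ 2 := by
    rw [← padSum m (n-1) hnm (fun j => u j ^ 2)]
    refine Finset.sum_congr rfl fun i _ => ?_
    by_cases h : i.val < n - 1 <;> simp [hU, h]
  have hSpad : (∑ j : Fin (n - 1), u₀ 0 ⟨j.val + 1, by have := j.isLt; omega⟩ * u j)
      = ∑ t : Fin m, u₀ 0 t.succ * U t := by
    rw [← padSum m (n-1) hnm (fun j => u₀ 0 ⟨j.val + 1, by have := j.isLt; omega⟩ * u j)]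
    refine Finset.sum_congr rfl fun i _ => ?_
    by_cases h : i.val < n - 1
    · simp only [hU, dif_pos h]
      rfl
    · simp [hU, h]
  rw [hQpad, hSpad]
  linear_combination hfin
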